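/- For all r, s, t ∈ ℝ⁴, the characteristic polynomial of the product matrix M_{rst} = M_r·M_s·M_t equals (x² − ‖r‖²‖s‖²‖t‖²)(x² + 2P(r,s,t)x + ‖r‖²‖s‖²‖t‖²), where P(r,s,t) = Re(qr·qs·qt). -/

import Mathlib

noncomputable section

open Real Polynomial

attribute [local instance] Matrix.frobeniusNormedAddCommGroup Matrix.frobeniusNormedSpace

/-- The quaternion corresponding to a vector in ℝ⁴. -/
def quat (t : EuclideanSpace ℝ (Fin 4)) : Quaternion ℝ := ⟨t 0, t 1, t 2, t 3⟩

/-- P(r,s,t) = Re(qr·qs·qt). -/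
def Pq (r s t : EuclideanSpace ℝ (Fin 4)) : ℝ := (quat r * quat s * quat t).re

/-- The 4×4 matrix M_s. -/
def Mmat (s : EuclideanSpace ℝ (Fin 4)) : Matrix (Fin 4) (Fin 4) ℝ :=
  !![s 0, -s 1, -s 2, -s 3;
     -s 1, -s 0, -s 3, s 2;
     -s 2, s 3, -s 0, -s 1;
     -s 3, -s 2, s 1, -s 0]

set_option maxHeartbeats 1000000

lemma norm_sq4 (x : EuclideanSpace ℝ (Fin 4)) :
    ‖x‖ ^ 2 = x 0 ^ 2 + x 1 ^ 2 + x 2 ^ 2 + x 3 ^ 2 := by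
  rw [EuclideanSpace.norm_eq, Real.sq_sqrt (by positivity)]
  simp [Fin.sum_univ_four, sq_abs]

lemma cpcomm (A B : Matrix (Fin 4) (Fin 4) ℝ) (hB : B.det ≠ 0) :
    (A * B).charpoly = (B * A).charpoly := by
  have h : B.map C * (A * B).charmatrix = (B * A).charmatrix * B.map C := by
    unfold Matrix.charmatrix
    simp only [RingHom.mapMatrix_apply, mul_sub, sub_mul, ← Matrix.map_mul]
    rw [← mul_assoc B A B]
    congr 1
    exact ((Matrix.scalar_commute (X : Polynomial ℝ) (fun r => Commute.all _ _) (B.map C)).eq).symm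
  have hd := congrArg Matrix.det h
  rw [Matrix.det_mul, Matrix.det_mul] at hd
  have hC : (B.map C).det ≠ 0 := by
    rw [← RingHom.mapMatrix_apply, ← RingHom.map_det]
    simpa using hB
  rw [Matrix.charpoly, Matrix.charpoly]
  exact mul_left_cancel₀ hC (hd.trans (mul_comm _ _))

lemma det4 (A : Matrix (Fin 4) (Fin 4) (Polynomial ℝ)) :
    A.det = A 0 0*A 1 1*A 2 2*A 3 3 - A 0 0*A 1 1*A 2 3*A 3 2 - A 0 0*A 1 2*A 2 1*A 3 3 + A 0 0*A 1 2*A 2 3*A 3 1 + A 0 0*A 1 3*A 2 1*A 3 2 - A 0 0*A 1 3*A 2 2*A 3 1 - A 0 1*A 1 0*A 2 2*A 3 3 + A 0 1*A 1 0*A 2 3*A 3 2 + A 0 1*A 1 2*A 2 0*A 3 3 - A 0 1*A 1 2*A 2 3*A 3 0 - A 0 1*A 1 3*A 2 0*A 3 2 + A 0 1*A 1 3*A 2 2*A 3 0 + A 0 2*A 1 0*A 2 1*A 3 3 - A 0 2*A 1 0*A 2 3*A 3 1 - A 0 2*A 1 1*A 2 0*A 3 3 + A 0 2*A 1 1*A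 2 3*A 3 0 + A 0 2*A 1 3*A 2 0*A 3 1 - A 0 2*A 1 3*A 2 1*A 3 0 - A 0 3*A 1 0*A 2 1*A 3 2 + A 0 3*A 1 0*A 2 2*A 3 1 + A 0 3*A 1 1*A 2 0*A 3 2 - A 0 3*A 1 1*A 2 2*A 3 0 - A 0 3*A 1 2*A 2 0*A 3 1 + A 0 3*A 1 2*A 2 1*A 3 0 := by
  rw [Matrix.det_succ_row_zero]
  simp only [Fin.sum_univ_four, Matrix.det_fin_three, Matrix.submatrix_apply,
    show (((0:Fin 4)).succAbove 0) = 1 from by decide, show (((0:Fin 4)).succAbove 1) = 2 from by decide, show (((0:Fin 4)).succAbove 2) = 3 from by decide, show (((1:Fin 4)).succAbove 0) = 0 from by decide, show (((1:Fin 4)).succAbove 1) = 2 from by decide, show (((1:Fin 4)).succAbove 2) = 3 from by decide, show (((2:Fin 4)).succAbove 0) = 0 from by decide, show (((2:Fin 4)).succAbove 1) = 1 from by decide, show (((2:Fin 4)).succAbove 2) = 3 from by decide, show (((3:Fin 4)).succAbove 0) = 0 from by decide, show (((3:Fin 4)).succAbove 1) = 1 from by decide, show (((3:Fin 4)).succAbove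 2) = 2 from by decide, show Fin.succ (0:Fin 3) = 1 from rfl, show Fin.succ (1:Fin 3) = 2 from rfl, show Fin.succ (2:Fin 3) = 3 from rfl, show (((0:Fin 4)):ℕ) = 0 from rfl, show (((1:Fin 4)):ℕ) = 1 from rfl, show (((2:Fin 4)):ℕ) = 2 from rfl, show (((3:Fin 4)):ℕ) = 3 from rfl]
  ring

lemma key4 (u0 u1 u2 u3 : ℝ) :
    (!![u0, -u1, -u2, -u3;
        -u1, -u0, -u3, u2;
        -u2, u3, -u0, -u1;
        -u3, -u2, u1, -u0] : Matrix (Fin 4) (Fin 4) ℝ).charpoly =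
      (X ^ 2 - C (u0^2+u1^2+u2^2+u3^2)) *
        (X ^ 2 + C (2*u0) * X + C (u0^2+u1^2+u2^2+u3^2)) := by
  rw [Matrix.charpoly, det4]
  simp only [Matrix.charmatrix_apply_eq, Matrix.charmatrix_apply_ne, ne_eq, Fin.reduceEq,
    not_false_iff, Matrix.cons_val', Matrix.cons_val_zero, Matrix.cons_val_one, Matrix.head_cons,
    Matrix.empty_val', Matrix.cons_val_fin_one, Matrix.head_fin_const, Matrix.of_apply,
    Matrix.cons_val_two, Matrix.cons_val_three, Matrix.tail_cons,
    map_add, map_mul, map_sub, map_neg, map_pow, map_ofNat, Polynomial.C_1, Polynomial.C_0]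
  ring

lemma cp_zero4 : (0 : Matrix (Fin 4) (Fin 4) ℝ).charpoly = X ^ 4 := by
  have h := key4 0 0 0 0
  have hz : (!![(0:ℝ), -0, -0, -0; -0, -0, -0, 0; -0, 0, -0, -0; -0, -0, 0, -0]
      : Matrix (Fin 4) (Fin 4) ℝ) = 0 := by
    ext i j
    fin_cases i <;> fin_cases j <;>
      simp [Matrix.vecHead, Matrix.vecTail]
  rw [hz] at h
  rw [h]
  simp
  ring

lemma det_sq (Z : Matrix (Fin 4) (Fin 4) ℝ) (n : ℝ) (h : Z * Z.transpose = n • 1) (hn : n ≠ 0) :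
    Z.det ≠ 0 := by
  have hd := congrArg Matrix.det h
  rw [Matrix.det_mul, Matrix.det_transpose, Matrix.det_smul, Matrix.det_one] at hd
  intro h0
  rw [h0, mul_zero] at hd
  simp only [Fintype.card_fin, mul_one] at hd
  exact pow_ne_zero 4 hn hd.symm

lemma norm_sq_ne (x : EuclideanSpace ℝ (Fin 4)) (hx : x ≠ 0) :
    x 0 ^ 2 + x 1 ^ 2 + x 2 ^ 2 + x 3 ^ 2 ≠ 0 := by
  rw [← norm_sq4]
  exact pow_ne_zero 2 (norm_ne_zero_iff.mpr hx)

theorem stmt8 (r s t : EuclideanSpace ℝ (Fin 4)) :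
    (Mmat r * Mmat s * Mmat t).charpoly =
      (X ^ 2 - C (‖r‖ ^ 2 * ‖s‖ ^ 2 * ‖t‖ ^ 2)) *
        (X ^ 2 + C (2 * Pq r s t) * X + C (‖r‖ ^ 2 * ‖s‖ ^ 2 * ‖t‖ ^ 2)) := by
  by_cases hr : r = 0
  · subst hr
    have h0 : Mmat (0 : EuclideanSpace ℝ (Fin 4)) = 0 := by
      ext i j
      fin_cases i <;> fin_cases j <;> simp [Mmat, Matrix.vecHead, Matrix.vecTail]
    have hq : quat (0 : EuclideanSpace ℝ (Fin 4)) = 0 := by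
      ext <;> simp [quat] <;> rfl
    rw [h0, zero_mul, zero_mul, cp_zero4]
    simp [Pq, hq, show QuaternionAlgebra.re (0 : Quaternion ℝ) = 0 from rfl]
    ring
  by_cases ht : t = 0
  · subst ht
    have h0 : Mmat (0 : EuclideanSpace ℝ (Fin 4)) = 0 := by
      ext i j
      fin_cases i <;> fin_cases j <;> simp [Mmat, Matrix.vecHead, Matrix.vecTail]
    have hq : quat (0 : EuclideanSpace ℝ (Fin 4)) = 0 := by
      ext <;> simp [quat] <;> rfl
    rw [h0, mul_zero, cp_zero4]
    simp [Pq, hq, show QuaternionAlgebra.re (0 : Quaternion ℝ) = 0 from rfl]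
    ring
  have hMr : (Mmat r).det ≠ 0 := by
    refine det_sq _ (r 0 ^ 2 + r 1 ^ 2 + r 2 ^ 2 + r 3 ^ 2) ?_ (norm_sq_ne r hr)
    ext i j
    fin_cases i <;> fin_cases j <;>
      simp [Mmat, Matrix.transpose_apply, Matrix.mul_apply, Fin.sum_univ_four, Matrix.one_apply, Matrix.vecHead, Matrix.vecTail] <;> ring
  set Rt : Matrix (Fin 4) (Fin 4) ℝ :=
    !![t 0, -t 1, -t 2, -t 3;
       t 1, t 0, t 3, -t 2;
       t 2, -t 3, t 0, t 1;
       t 3, t 2, -t 1, t 0] with hRt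
  have hRtd : Rt.det ≠ 0 := by
    refine det_sq _ (t 0 ^ 2 + t 1 ^ 2 + t 2 ^ 2 + t 3 ^ 2) ?_ (norm_sq_ne t ht)
    ext i j
    fin_cases i <;> fin_cases j <;>
      simp [hRt, Matrix.transpose_apply, Matrix.mul_apply, Fin.sum_univ_four, Matrix.one_apply, Matrix.vecHead, Matrix.vecTail] <;> ring
  set z0 := r 0 * s 0 - r 1 * s 1 - r 2 * s 2 - r 3 * s 3 with hz0
  set z1 := r 0 * s 1 + r 1 * s 0 + r 2 * s 3 - r 3 * s 2 with hz1
  set z2 := r 0 * s 2 - r 1 * s 3 + r 2 * s 0 + r 3 * s 1 with hz2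
  set z3 := r 0 * s 3 + r 1 * s 2 - r 2 * s 1 + r 3 * s 0 with hz3
  set V : Matrix (Fin 4) (Fin 4) ℝ :=
    !![z0, -z1, -z2, -z3;
       -z1, -z0, -z3, z2;
       -z2, z3, -z0, -z1;
       -z3, -z2, z1, -z0] with hV
  set u0 := t 0 * z0 - t 1 * z1 - t 2 * z2 - t 3 * z3 with hu0
  set u1 := t 0 * z1 + t 1 * z0 + t 2 * z3 - t 3 * z2 with hu1
  set u2 := t 0 * z2 - t 1 * z3 + t 2 * z0 + t 3 * z1 with hu2
  set u3 := t 0 * z3 + t 1 * z2 - t 2 * z1 + t 3 * z0 with hu3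
  have E2 : Mmat s * Mmat t * Mmat r = Rt * V := by
    ext i j
    fin_cases i <;> fin_cases j <;>
      simp [Mmat, hRt, hV, hz0, hz1, hz2, hz3, Matrix.mul_apply, Fin.sum_univ_four] <;> ring
  have E3 : V * Rt =
      !![u0, -u1, -u2, -u3;
         -u1, -u0, -u3, u2;
         -u2, u3, -u0, -u1;
         -u3, -u2, u1, -u0] := by
    ext i j
    fin_cases i <;> fin_cases j <;>
      simp [hRt, hV, hu0, hu1, hu2, hu3, hz0, hz1, hz2, hz3,
        Matrix.mul_apply, Fin.sum_univ_four] <;> ring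
  have step1 : (Mmat r * Mmat s * Mmat t).charpoly = (Mmat s * Mmat t * Mmat r).charpoly := by
    rw [mul_assoc]
    exact (cpcomm (Mmat s * Mmat t) (Mmat r) hMr).symm
  have step2 : (Rt * V).charpoly = (V * Rt).charpoly := (cpcomm V Rt hRtd).symm
  rw [step1, E2, step2, E3, key4]
  have h1 : u0^2+u1^2+u2^2+u3^2 = ‖r‖ ^ 2 * ‖s‖ ^ 2 * ‖t‖ ^ 2 := by
    rw [norm_sq4 r, norm_sq4 s, norm_sq4 t, hu0, hu1, hu2, hu3, hz0, hz1, hz2, hz3]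
    ring
  have h2 : 2*u0 = 2 * Pq r s t := by
    rw [Pq, Quaternion.re_mul, Quaternion.re_mul, Quaternion.imI_mul, Quaternion.imJ_mul, Quaternion.imK_mul]
    simp only [Pq, Quaternion.re_mul, Quaternion.imI_mul, Quaternion.imJ_mul, Quaternion.imK_mul,
      quat, hu0, hz0, hz1, hz2, hz3]
    ring
  rw [h1, h2]
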